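/- Almost surely, lim_{n→∞} |G^n(ω)| / |B̃(n)| = κ(1−p), where |G^n(ω)| is the number of vertices of the hole graph restricted to the window Λ^n = [−n,n]^d (equivalently, the number of finite dual clusters entirely contained in B̃(n)) and κ(q) = E_q(|C(0)|^{−1}) for bond percolation with parameter q (with the convention |C(0)|^{−1} = 0 when |C(0)| = ∞). -/

import Mathlib

open MeasureTheory Set Relation Filter

namespace HP

noncomputable section

/-- An elementary cube in `ℝ^d` is encoded by, for each coordinate, an integer `l`
and a Boolean which is `true` for the nondegenerate interval `[l, l+1]` and
`false` for the degenerate interval `[l, l]`. -/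
abbrev Cube (d : ℕ) := Fin d → ℤ × Bool

/-- The elementary interval `[l, l+1]` (nondegenerate) or `{l}` (degenerate). -/
def intervalSet (l : ℤ) (b : Bool) : Set ℝ :=
  if b then Set.Icc (l : ℝ) ((l : ℝ) + 1) else {(l : ℝ)}

/-- The subset of `ℝ^d` realized by an encoded elementary cube. -/
def cubeSet {d : ℕ} (c : Cube d) : Set (Fin d → ℝ) :=
  {x | ∀ i, x i ∈ intervalSet (c i).1 (c i).2}

/-- The dimension of an elementary cube: the number of nondegenerate factors. -/
def cdim {d : ℕ} (c : Cube d) : ℕ :=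
  (Finset.univ.filter (fun i => (c i).2 = true)).card

/-- A face in `ℝ^d` is an elementary cube of dimension `d-1`. -/
def IsFace {d : ℕ} (c : Cube d) : Prop := cdim c = d - 1

/-- Two faces are adjacent if their intersection is an elementary cube of dimension `d-2`. -/
def FaceAdj {d : ℕ} (Q Q' : Cube d) : Prop :=
  ∃ c : Cube d, cdim c = d - 2 ∧ cubeSet Q ∩ cubeSet Q' = cubeSet c

/-- The type of faces in `ℝ^d`. -/
abbrev Face (d : ℕ) := {c : Cube d // IsFace c}

/-- The fixed face `Q₀ = [0,0] × [0,1]^(d-1)`. -/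
def Q0 (d : ℕ) : Cube d := fun i => if (i : ℕ) = 0 then ((0 : ℤ), false) else ((0 : ℤ), true)

/-- A measure on `{0,1}^I` is the Bernoulli(p) product measure: it is a probability
measure and cylinder events have the product probabilities. -/
def IsBernoulliProduct {I : Type*} (p : ℝ) (μ : Measure (I → Bool)) : Prop :=
  IsProbabilityMeasure μ ∧
    ∀ (s : Finset I) (b : I → Bool),
      μ {ω | ∀ i ∈ s, ω i = b i}
        = ∏ i ∈ s, (if b i = true then ENNReal.ofReal p else ENNReal.ofReal (1 - p))

/-- Open connectivity between faces: a chain of open, pairwise adjacent faces. -/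
def faceOpenConn {d : ℕ} (ω : Face d → Bool) : Face d → Face d → Prop :=
  Relation.ReflTransGen (fun A B : Face d => FaceAdj A.1 B.1 ∧ ω A = true ∧ ω B = true)

/-- The open face cluster of a face `Q` (empty when `Q` is closed). -/
def faceCluster {d : ℕ} (ω : Face d → Bool) (Q : Face d) : Set (Face d) :=
  {Q' | ω Q = true ∧ ω Q' = true ∧ faceOpenConn ω Q Q'}

/-- The random cubical set: the union of all open faces. -/
def K {d : ℕ} (ω : Face d → Bool) : Set (Fin d → ℝ) :=
  ⋃ (Q : Face d) (_ : ω Q = true), cubeSet Q.1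

/-- The dual vertex `x* = x + (1/2, …, 1/2)`. -/
def dualPt {d : ℕ} (x : Fin d → ℤ) : Fin d → ℝ := fun i => (x i : ℝ) + 1/2

/-- The connected component of the complement of `K(ω)` containing the dual vertex `x*`. -/
def holeAt {d : ℕ} (ω : Face d → Bool) (x : Fin d → ℤ) : Set (Fin d → ℝ) :=
  connectedComponentIn (K ω)ᶜ (dualPt x)

/-- A hole is a bounded connected component of the complement of `K(ω)`. -/
def IsHole {d : ℕ} (ω : Face d → Bool) (D : Set (Fin d → ℝ)) : Prop :=
  (∃ a ∈ (K ω)ᶜ, D = connectedComponentIn (K ω)ᶜ a) ∧ Bornology.IsBounded D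

/-- The dual vertex `x*` lies in a hole. -/
def IsHolePt {d : ℕ} (ω : Face d → Bool) (x : Fin d → ℤ) : Prop :=
  dualPt x ∈ (K ω)ᶜ ∧ Bornology.IsBounded (holeAt ω x)

/-- Two holes are adjacent when they share a common boundary face. -/
def HoleAdj {d : ℕ} (ω : Face d → Bool) (D D' : Set (Fin d → ℝ)) : Prop :=
  D ≠ D' ∧ ∃ Q : Cube d, IsFace Q ∧ cubeSet Q ⊆ frontier D ∧ cubeSet Q ⊆ frontier D'

/-- Connectivity in the hole graph. -/
def HoleConn {d : ℕ} (ω : Face d → Bool) :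
    Set (Fin d → ℝ) → Set (Fin d → ℝ) → Prop :=
  Relation.ReflTransGen (fun A B => IsHole ω A ∧ IsHole ω B ∧ HoleAdj ω A B)

/-- The hole cluster of a hole `D`: all holes connected to it in the hole graph. -/
def holeCluster {d : ℕ} (ω : Face d → Bool) (D : Set (Fin d → ℝ)) :
    Set (Set (Fin d → ℝ)) :=
  {D' | IsHole ω D' ∧ HoleConn ω D D'}

/-- The dual vertex `x*` lies in a hole belonging to an infinite hole cluster. -/
def InfClusterAt {d : ℕ} (ω : Face d → Bool) (x : Fin d → ℤ) : Prop :=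
  IsHolePt ω x ∧ (holeCluster ω (holeAt ω x)).Infinite

/-- `x* ↔_hole y*` : both dual vertices lie in holes belonging to the same hole cluster. -/
def HoleConnPts {d : ℕ} (ω : Face d → Bool) (x y : Fin d → ℤ) : Prop :=
  IsHolePt ω x ∧ IsHolePt ω y ∧ HoleConn ω (holeAt ω x) (holeAt ω y)

/-- A set of holes is an infinite hole cluster. -/
def IsInfCluster {d : ℕ} (ω : Face d → Bool) (G : Set (Set (Fin d → ℝ))) : Prop :=
  (∃ D, IsHole ω D ∧ G = holeCluster ω D) ∧ G.Infinite

/-- Nearest-neighbour adjacency on `ℤ^d` (ℓ¹-distance one). -/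
def adjZ {d : ℕ} (x y : Fin d → ℤ) : Prop := (∑ i, |x i - y i|) = 1

/-- The occupied cell of the dual vertex `x*`: `∏ [(x*)_i - 1/2, (x*)_i + 1/2] = ∏ [x_i, x_i+1]`. -/
def cell {d : ℕ} (x : Fin d → ℤ) : Set (Fin d → ℝ) :=
  {y | ∀ i, y i ∈ Set.Icc (x i : ℝ) ((x i : ℝ) + 1)}

/-- The face separating the occupied cells of two adjacent dual vertices. -/
def faceBetween {d : ℕ} (x y : Fin d → ℤ) : Cube d :=
  fun i => if x i = y i then (x i, true) else (max (x i) (y i), false)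

/-- The dual bond between adjacent dual vertices is open iff the transversal face is closed. -/
def dualOpen {d : ℕ} (ω : Face d → Bool) (x y : Fin d → ℤ) : Prop :=
  adjZ x y ∧ ∀ Q : Face d, Q.1 = faceBetween x y → ω Q = false

/-- The open dual cluster of a dual vertex. -/
def dualCluster {d : ℕ} (ω : Face d → Bool) (x : Fin d → ℤ) : Set (Fin d → ℤ) :=
  {y | Relation.ReflTransGen (dualOpen ω) x y}

/-- The box `B̃(n)` of dual vertices `x*` with `‖x*‖∞ < n`, indexed by `x ∈ ℤ^d`. -/
def BnZ (d n : ℕ) : Set (Fin d → ℤ) := {y | ∀ i, -(n:ℤ) ≤ y i ∧ y i < n}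

/-- The hole at `x*` contains no dual vertex other than `x*`. -/
def SingletonHole {d : ℕ} (ω : Face d → Bool) (x : Fin d → ℤ) : Prop :=
  IsHolePt ω x ∧ ∀ y : Fin d → ℤ, dualPt y ∈ holeAt ω x → y = x

/-- Hole-graph connectivity avoiding the hole `D`. -/
def HoleConnAvoid {d : ℕ} (ω : Face d → Bool) (D : Set (Fin d → ℝ)) :
    Set (Fin d → ℝ) → Set (Fin d → ℝ) → Prop :=
  Relation.ReflTransGen
    (fun A B => IsHole ω A ∧ IsHole ω B ∧ HoleAdj ω A B ∧ A ≠ D ∧ B ≠ D)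

/-- The connected components of the hole cluster of `D` after deleting the vertex `D`. -/
def delComponents {d : ℕ} (ω : Face d → Bool) (D : Set (Fin d → ℝ)) :
    Set (Set (Set (Fin d → ℝ))) :=
  {Kc | ∃ E, IsHole ω E ∧ E ∈ holeCluster ω D ∧ E ≠ D ∧
        Kc = {F | IsHole ω F ∧ HoleConnAvoid ω D E F}}

/-- `x*` is a trifurcation: its hole is a singleton hole lying in an infinite hole
cluster, and deleting it leaves exactly three components, all infinite. -/
def Trifurcation {d : ℕ} (ω : Face d → Bool) (x : Fin d → ℤ) : Prop :=
  SingletonHole ω x ∧ (holeCluster ω (holeAt ω x)).Infinite ∧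
  (delComponents ω (holeAt ω x)).Finite ∧ (delComponents ω (holeAt ω x)).ncard = 3 ∧
  ∀ Kc ∈ delComponents ω (holeAt ω x), Kc.Infinite

section Aux
variable {d : ℕ}

lemma adjZ_symm {x y : Fin d → ℤ} (h : adjZ x y) : adjZ y x := by
  unfold adjZ at *
  simpa [abs_sub_comm] using h

lemma adjZ_abs_le {x y : Fin d → ℤ} (h : adjZ x y) (i : Fin d) : |x i - y i| ≤ 1 := by
  unfold adjZ at h
  calc |x i - y i| ≤ ∑ j, |x j - y j| :=
        Finset.single_le_sum (f := fun j => |x j - y j|) (fun j _ => abs_nonneg _) (Finset.mem_univ i)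
    _ = 1 := h

lemma faceBetween_symm (x y : Fin d → ℤ) : faceBetween x y = faceBetween y x := by
  funext i
  by_cases h : x i = y i
  · simp [faceBetween, h]
  · have h' : y i ≠ x i := fun hh => h hh.symm
    simp [faceBetween, h, h', max_comm]

lemma dualOpen_symm {ω : Face d → Bool} {x y : Fin d → ℤ} (h : dualOpen ω x y) :
    dualOpen ω y x := by
  refine ⟨adjZ_symm h.1, fun Q hQ => h.2 Q ?_⟩
  rw [hQ, faceBetween_symm]

lemma dualOpen_symmetric (ω : Face d → Bool) : Symmetric (dualOpen ω) :=
  fun _ _ h => dualOpen_symm h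

lemma mem_dualCluster_self (ω : Face d → Bool) (x : Fin d → ℤ) : x ∈ dualCluster ω x :=
  Relation.ReflTransGen.refl

lemma dualCluster_eq_of_mem {ω : Face d → Bool} {x y : Fin d → ℤ}
    (h : y ∈ dualCluster ω x) : dualCluster ω y = dualCluster ω x := by
  ext z
  constructor
  · intro hz
    exact Relation.ReflTransGen.trans h hz
  · intro hz
    exact Relation.ReflTransGen.trans
      ((@Relation.ReflTransGen.symmetric _ _ ⟨dualOpen_symmetric ω⟩).symm _ _ h) hz

/-- The box `{y | ∀ i, |y i - x i| ≤ m}`. -/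
def boxZ (x : Fin d → ℤ) (m : ℕ) : Set (Fin d → ℤ) := {y | ∀ i, |y i - x i| ≤ (m : ℤ)}

lemma mem_boxZ_self (x : Fin d → ℤ) (m : ℕ) : x ∈ boxZ x m := by
  intro i; simp

lemma boxZ_eq_coe (x : Fin d → ℤ) (m : ℕ) :
    boxZ x m = ↑(Fintype.piFinset fun i => Finset.Icc (x i - m) (x i + m)) := by
  ext y
  constructor
  · intro h
    rw [Finset.mem_coe, Fintype.mem_piFinset]
    intro i
    have := h i
    rw [abs_le] at this
    rw [Finset.mem_Icc]
    omega
  · intro h i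
    rw [Finset.mem_coe, Fintype.mem_piFinset] at h
    have := h i
    rw [Finset.mem_Icc] at this
    rw [abs_le]
    omega

lemma boxZ_finite (x : Fin d → ℤ) (m : ℕ) : (boxZ x m).Finite := by
  rw [boxZ_eq_coe]; exact (Fintype.piFinset _).finite_toSet

end Aux
section Aux2
variable {d : ℕ}

lemma dualCluster_locality {ω ω' : Face d → Bool} {x : Fin d → ℤ} {S : Set (Fin d → ℤ)}
    (hsub : dualCluster ω x ⊆ S)
    (hagree : ∀ y z : Fin d → ℤ, y ∈ S → adjZ y z →
      ∀ Q : Face d, Q.1 = faceBetween y z → ω Q = ω' Q) :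
    dualCluster ω' x = dualCluster ω x := by
  have dir1 : dualCluster ω x ⊆ dualCluster ω' x := by
    intro y hy
    unfold dualCluster at hy ⊢
    rw [Set.mem_setOf_eq] at hy ⊢
    induction hy with
    | refl => exact Relation.ReflTransGen.refl
    | @tail b c hxb hbc ih =>
      refine Relation.ReflTransGen.tail ih ?_
      have hbS : b ∈ S := hsub hxb
      exact ⟨hbc.1, fun Q hQ => by rw [← hagree b c hbS hbc.1 Q hQ]; exact hbc.2 Q hQ⟩
  have dir2 : dualCluster ω' x ⊆ dualCluster ω x := by
    intro y hy
    unfold dualCluster at hy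
    rw [Set.mem_setOf_eq] at hy
    induction hy with
    | refl => exact mem_dualCluster_self ω x
    | @tail b c hxb hbc ih =>
      have hbS : b ∈ S := hsub ih
      have hop : dualOpen ω b c :=
        ⟨hbc.1, fun Q hQ => by rw [hagree b c hbS hbc.1 Q hQ]; exact hbc.2 Q hQ⟩
      exact Relation.ReflTransGen.tail ih hop
  exact Set.Subset.antisymm dir2 dir1

/-- ℓ∞ distance from `x`. -/
def distX (x z : Fin d → ℤ) : ℕ := Finset.univ.sup fun i => (z i - x i).natAbs

lemma distX_self (x : Fin d → ℤ) : distX x x = 0 := by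
  simp [distX]

lemma distX_le_of_adj {x b c : Fin d → ℤ} (h : adjZ b c) :
    distX x c ≤ distX x b + 1 := by
  refine Finset.sup_le fun i _ => ?_
  have h2 : |b i - c i| ≤ 1 := adjZ_abs_le h i
  have h1 : |c i - x i| ≤ |b i - x i| + 1 := by
    calc |c i - x i| ≤ |c i - b i| + |b i - x i| := abs_sub_le _ _ _
      _ ≤ 1 + |b i - x i| := by rw [abs_sub_comm]; exact add_le_add_left h2 _
      _ = |b i - x i| + 1 := by ring
  rw [Int.abs_eq_natAbs, Int.abs_eq_natAbs] at h1
  have h3 : (c i - x i).natAbs ≤ (b i - x i).natAbs + 1 := by exact_mod_cast h1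
  have h4 : (b i - x i).natAbs ≤ distX x b :=
    Finset.le_sup (f := fun j => (b j - x j).natAbs) (Finset.mem_univ i)
  omega

lemma exists_distX {ω : Face d → Bool} {x y : Fin d → ℤ} (hy : y ∈ dualCluster ω x) :
    ∀ k, k ≤ distX x y → ∃ z ∈ dualCluster ω x, distX x z = k := by
  unfold dualCluster at hy
  rw [Set.mem_setOf_eq] at hy
  induction hy with
  | refl =>
    intro k hk
    rw [distX_self] at hk
    exact ⟨x, mem_dualCluster_self ω x, by rw [distX_self]; omega⟩
  | @tail b c hxb hbc ih =>
    intro k hk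
    by_cases h : k ≤ distX x b
    · exact ih k h
    · have h1 : distX x c ≤ distX x b + 1 := distX_le_of_adj hbc.1
      have h2 : k = distX x c := by omega
      exact ⟨c, Relation.ReflTransGen.tail hxb hbc, h2.symm⟩

lemma ncard_ge_of_mem {ω : Face d → Bool} {x y : Fin d → ℤ}
    (hy : y ∈ dualCluster ω x) (hfin : (dualCluster ω x).Finite) :
    distX x y + 1 ≤ (dualCluster ω x).ncard := by
  classical
  choose! g hg1 hg2 using exists_distX hy
  set D := distX x y with hD
  have hcard : ((Finset.range (D + 1)).image g).card = D + 1 := by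
    rw [Finset.card_image_of_injOn, Finset.card_range]
    intro k1 hk1 k2 hk2 he
    rw [Finset.coe_range, Set.mem_Iio] at hk1 hk2
    have e1 := hg2 k1 (by omega)
    have e2 := hg2 k2 (by omega)
    rw [he] at e1
    omega
  have hsub : ↑((Finset.range (D + 1)).image g) ⊆ dualCluster ω x := by
    intro z hz
    rw [Finset.coe_image] at hz
    obtain ⟨k, hk, rfl⟩ := hz
    rw [Finset.coe_range, Set.mem_Iio] at hk
    exact hg1 k (by omega)
  calc D + 1 = ((Finset.range (D + 1)).image g).card := hcard.symm
    _ = (↑((Finset.range (D + 1)).image g) : Set (Fin d → ℤ)).ncard :=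
        (Set.ncard_coe_finset _).symm
    _ ≤ (dualCluster ω x).ncard := Set.ncard_le_ncard hsub hfin

lemma distX_ge_of_not_mem_boxZ {x z : Fin d → ℤ} {m : ℕ} (h : z ∉ boxZ x m) :
    m + 1 ≤ distX x z := by
  rw [boxZ, Set.mem_setOf_eq] at h
  push_neg at h
  obtain ⟨i, hi⟩ := h
  have h2 : m + 1 ≤ (z i - x i).natAbs := by
    rw [Int.abs_eq_natAbs] at hi
    omega
  exact le_trans h2 (Finset.le_sup (f := fun j => (z j - x j).natAbs) (Finset.mem_univ i))

end Aux2
section Aux3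
open scoped Classical
variable {d : ℕ}

/-- The set of faces that can influence the cluster of `x` within `boxZ x m`. -/
def depFaces (x : Fin d → ℤ) (m : ℕ) : Set (Face d) :=
  {Q | ∃ y z : Fin d → ℤ, y ∈ boxZ x m ∧ adjZ y z ∧ Q.1 = faceBetween y z}

lemma faceBetween_coord {y z : Fin d → ℤ} (h : adjZ y z) (i : Fin d) :
    y i ≤ (faceBetween y z i).1 ∧ (faceBetween y z i).1 ≤ y i + 1 := by
  have hz := adjZ_abs_le h i
  rw [abs_le] at hz
  unfold faceBetween
  by_cases hc : y i = z i
  · rw [if_pos hc]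
    exact ⟨le_refl _, by omega⟩
  · rw [if_neg hc]
    refine ⟨le_max_left _ _, max_le (by omega) (by omega)⟩

lemma depFaces_coord {x : Fin d → ℤ} {m : ℕ} {Q : Face d} (hQ : Q ∈ depFaces x m) (i : Fin d) :
    x i - m ≤ (Q.1 i).1 ∧ (Q.1 i).1 ≤ x i + m + 1 := by
  obtain ⟨y, z, hy, hadj, hfb⟩ := hQ
  have h1 := faceBetween_coord hadj i
  have h2 := hy i
  rw [abs_le] at h2
  rw [hfb]
  omega

lemma depFaces_disjoint {x y : Fin d → ℤ} {m : ℕ} (i : Fin d)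
    (h : 2 * (m : ℤ) + 3 ≤ |x i - y i|) : Disjoint (depFaces x m) (depFaces y m) := by
  rw [Set.disjoint_left]
  intro Q hQx hQy
  have h1 := depFaces_coord hQx i
  have h2 := depFaces_coord hQy i
  have h' : 2 * (m : ℤ) + 3 ≤ x i - y i ∨ 2 * (m : ℤ) + 3 ≤ y i - x i := by
    rcases abs_cases (x i - y i) with ⟨e, _⟩ | ⟨e, _⟩
    · left; omega
    · right; omega
  omega

lemma depFaces_finite (x : Fin d → ℤ) (m : ℕ) : (depFaces x m).Finite := by
  have hsub : depFaces x m ⊆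
      ⋃ (y ∈ boxZ x m) (z ∈ boxZ x (m + 1)), {Q : Face d | Q.1 = faceBetween y z} := by
    rintro Q ⟨y, z, hy, hadj, hfb⟩
    have hz : z ∈ boxZ x (m + 1) := by
      intro i
      have h1 := adjZ_abs_le hadj i
      have h2 := hy i
      rw [abs_le] at h1 h2 ⊢
      push_cast
      omega
    exact Set.mem_biUnion hy (Set.mem_biUnion hz hfb)
  refine Set.Finite.subset ?_ hsub
  refine Set.Finite.biUnion (boxZ_finite x m) fun y _ =>
    Set.Finite.biUnion (boxZ_finite x (m + 1)) fun z _ => ?_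
  apply Set.Subsingleton.finite
  intro Q1 h1 Q2 h2
  exact Subtype.ext (h1.trans h2.symm)

/-- The local observable: inverse cluster size if the cluster is inside the `m`-box. -/
def locInv (m : ℕ) (x : Fin d → ℤ) (ω : Face d → Bool) : ℝ :=
  if dualCluster ω x ⊆ boxZ x m then ((dualCluster ω x).ncard : ℝ)⁻¹ else 0

lemma locInv_nonneg (m : ℕ) (x : Fin d → ℤ) (ω : Face d → Bool) : 0 ≤ locInv m x ω := by
  unfold locInv
  split <;> positivity

lemma locInv_le_one (m : ℕ) (x : Fin d → ℤ) (ω : Face d → Bool) : locInv m x ω ≤ 1 := by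
  unfold locInv
  split
  · rename_i h
    have hfin : (dualCluster ω x).Finite := (boxZ_finite x m).subset h
    have hpos : 0 < (dualCluster ω x).ncard :=
      (Set.ncard_pos hfin).mpr ⟨x, mem_dualCluster_self ω x⟩
    rw [inv_le_one_iff₀]
    right
    exact_mod_cast hpos
  · exact zero_le_one

lemma dualCluster_eq_of_agree {ω ω' : Face d → Bool} {x : Fin d → ℤ} {m : ℕ}
    (h : ∀ Q ∈ depFaces x m, ω Q = ω' Q) (hc : dualCluster ω x ⊆ boxZ x m) :
    dualCluster ω' x = dualCluster ω x :=
  dualCluster_locality hc (fun y z hy hadj Q hQ => h Q ⟨y, z, hy, hadj, hQ⟩)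

lemma locInv_dep {m : ℕ} {x : Fin d → ℤ} {ω ω' : Face d → Bool}
    (h : ∀ Q ∈ depFaces x m, ω Q = ω' Q) : locInv m x ω = locInv m x ω' := by
  by_cases hc : dualCluster ω x ⊆ boxZ x m
  · have he := dualCluster_eq_of_agree h hc
    unfold locInv
    rw [he]
  · have hc' : ¬ dualCluster ω' x ⊆ boxZ x m := by
      intro hc'
      have he := dualCluster_eq_of_agree (fun Q hQ => (h Q hQ).symm) hc'
      rw [he] at hc
      exact hc hc'
    unfold locInv
    rw [if_neg hc, if_neg hc']

lemma inv_ncard_le_of_escape {ω : Face d → Bool} {x : Fin d → ℤ} {m : ℕ}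
    (hfin : (dualCluster ω x).Finite) (hesc : ¬ dualCluster ω x ⊆ boxZ x m) :
    ((dualCluster ω x).ncard : ℝ)⁻¹ ≤ ((m : ℝ) + 1)⁻¹ := by
  obtain ⟨y, hy, hny⟩ := Set.not_subset.mp hesc
  have h1 : m + 1 ≤ distX x y := distX_ge_of_not_mem_boxZ hny
  have h2 : m + 2 ≤ (dualCluster ω x).ncard := by
    have := ncard_ge_of_mem hy hfin
    omega
  have h3 : (m : ℝ) + 1 ≤ ((dualCluster ω x).ncard : ℝ) := by
    have : ((m : ℝ) + 2) ≤ ((dualCluster ω x).ncard : ℝ) := by exact_mod_cast h2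
    linarith
  exact inv_anti₀ (by positivity) h3

end Aux3
section Aux4
open scoped Classical
variable {d : ℕ}

/-- The Finset of dual vertices in the window. -/
def TB (d n : ℕ) : Finset (Fin d → ℤ) := Fintype.piFinset fun _ => Finset.Ico (-(n : ℤ)) n

lemma mem_TB {n : ℕ} {y : Fin d → ℤ} : y ∈ TB d n ↔ y ∈ BnZ d n := by
  rw [TB, Fintype.mem_piFinset]
  constructor
  · intro h i
    have := h i
    rw [Finset.mem_Ico] at this
    exact this
  · intro h i
    rw [Finset.mem_Ico]
    exact h i

lemma BnZ_eq_coe (d n : ℕ) : BnZ d n = ↑(TB d n) := by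
  ext y
  rw [Finset.mem_coe, mem_TB]

lemma BnZ_finite (d n : ℕ) : (BnZ d n).Finite := by
  rw [BnZ_eq_coe]
  exact (TB d n).finite_toSet

lemma card_TB (d n : ℕ) : (TB d n).card = (2 * n) ^ d := by
  have h : ((n : ℤ) - -(n : ℤ)).toNat = 2 * n := by omega
  rw [TB, Fintype.card_piFinset]
  rw [Finset.prod_congr rfl (fun i _ => by rw [Int.card_Ico, h])]
  rw [Finset.prod_const, Finset.card_univ, Fintype.card_fin]

/-- Inverse cluster size, restricted to clusters inside the window. -/
def winInv (n : ℕ) (x : Fin d → ℤ) (ω : Face d → Bool) : ℝ :=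
  if dualCluster ω x ⊆ BnZ d n then ((dualCluster ω x).ncard : ℝ)⁻¹ else 0

/-- Inverse cluster size (`0` for infinite clusters). -/
def globInv (x : Fin d → ℤ) (ω : Face d → Bool) : ℝ := ((dualCluster ω x).ncard : ℝ)⁻¹

lemma winInv_nonneg (n : ℕ) (x : Fin d → ℤ) (ω : Face d → Bool) : 0 ≤ winInv n x ω := by
  unfold winInv; split <;> positivity

lemma globInv_nonneg (x : Fin d → ℤ) (ω : Face d → Bool) : 0 ≤ globInv x ω := by
  unfold globInv; positivity

lemma globInv_le_one (x : Fin d → ℤ) (ω : Face d → Bool) : globInv x ω ≤ 1 := by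
  unfold globInv
  rcases Nat.eq_zero_or_pos (dualCluster ω x).ncard with h | h
  · rw [h]; norm_num
  · rw [inv_le_one_iff₀]; right; exact_mod_cast h

lemma winInv_le_locInv_add {n m : ℕ} {x : Fin d → ℤ} {ω : Face d → Bool} :
    winInv n x ω ≤ locInv m x ω + ((m : ℝ) + 1)⁻¹ := by
  by_cases hb : dualCluster ω x ⊆ boxZ x m
  · unfold winInv locInv
    rw [if_pos hb]
    split
    · exact le_add_of_nonneg_right (by positivity)
    · positivity
  · unfold winInv locInv
    rw [if_neg hb]
    split
    · rename_i hw
      have hfin : (dualCluster ω x).Finite := (BnZ_finite d n).subset hw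
      have := inv_ncard_le_of_escape hfin hb
      linarith
    · positivity

lemma locInv_le_winInv {n m : ℕ} {x : Fin d → ℤ} {ω : Face d → Bool}
    (hbox : boxZ x m ⊆ BnZ d n) : locInv m x ω ≤ winInv n x ω := by
  unfold locInv winInv
  split
  · rename_i hb
    rw [if_pos (hb.trans hbox)]
  · split <;> positivity

lemma locInv_le_globInv {m : ℕ} {x : Fin d → ℤ} {ω : Face d → Bool} :
    locInv m x ω ≤ globInv x ω := by
  unfold locInv globInv
  split
  · exact le_refl _
  · positivity

lemma globInv_le_locInv_add {m : ℕ} {x : Fin d → ℤ} {ω : Face d → Bool} :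
    globInv x ω ≤ locInv m x ω + ((m : ℝ) + 1)⁻¹ := by
  by_cases hb : dualCluster ω x ⊆ boxZ x m
  · unfold locInv
    rw [if_pos hb]
    exact le_add_of_nonneg_right (by positivity)
  · unfold locInv globInv
    rw [if_neg hb]
    by_cases hfin : (dualCluster ω x).Finite
    · have := inv_ncard_le_of_escape hfin hb
      linarith
    · rw [Set.Infinite.ncard (by exact hfin)]
      norm_num
      positivity

lemma winInv_le_one (n : ℕ) (x : Fin d → ℤ) (ω : Face d → Bool) : winInv n x ω ≤ 1 := by
  unfold winInv
  split
  · exact globInv_le_one x ω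
  · exact zero_le_one

/-- The key combinatorial identity: the number of clusters contained in the window equals
the sum of inverse cluster sizes. -/
lemma counting (ω : Face d → Bool) (n : ℕ) :
    ({C : Set (Fin d → ℤ) | (∃ x, C = dualCluster ω x) ∧ C.Finite ∧ C ⊆ BnZ d n}.ncard : ℝ)
      = ∑ x ∈ TB d n, winInv n x ω := by
  classical
  set S := {C : Set (Fin d → ℤ) | (∃ x, C = dualCluster ω x) ∧ C.Finite ∧ C ⊆ BnZ d n} with hSdef
  set T' : Finset (Fin d → ℤ) := (TB d n).filter (fun x => dualCluster ω x ⊆ BnZ d n) with hT'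
  set F : Finset (Set (Fin d → ℤ)) := T'.image (fun x => dualCluster ω x) with hF
  have hS : S = ↑F := by
    ext C
    constructor
    · rintro ⟨⟨x, rfl⟩, hfin, hsub⟩
      refine Finset.mem_coe.mpr (Finset.mem_image.mpr ⟨x, ?_, rfl⟩)
      rw [Finset.mem_filter]
      exact ⟨mem_TB.mpr (hsub (mem_dualCluster_self ω x)), hsub⟩
    · intro hC
      obtain ⟨x, hx, rfl⟩ := Finset.mem_image.mp (Finset.mem_coe.mp hC)
      rw [Finset.mem_filter] at hx
      exact ⟨⟨x, rfl⟩, (BnZ_finite d n).subset hx.2, hx.2⟩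
  have hsum : ∑ x ∈ TB d n, winInv n x ω = ∑ x ∈ T', ((dualCluster ω x).ncard : ℝ)⁻¹ := by
    rw [hT', Finset.sum_filter]
    exact Finset.sum_congr rfl fun x _ => by unfold winInv; rfl
  have hfib : ∑ x ∈ T', ((dualCluster ω x).ncard : ℝ)⁻¹ = ∑ C ∈ F, (1 : ℝ) := by
    rw [← Finset.sum_fiberwise_of_maps_to (g := fun x => dualCluster ω x) (t := F)
      (fun x hx => Finset.mem_image_of_mem _ hx)]
    refine Finset.sum_congr rfl fun C hC => ?_
    obtain ⟨x0, hx0, rfl⟩ := Finset.mem_image.mp hC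
    rw [Finset.mem_filter] at hx0
    have hfibeq : ↑(T'.filter (fun x => dualCluster ω x = dualCluster ω x0))
        = dualCluster ω x0 := by
      ext z
      rw [Finset.coe_filter]
      constructor
      · rintro ⟨_, hz⟩
        rw [← hz]
        exact mem_dualCluster_self ω z
      · intro hz
        have he := dualCluster_eq_of_mem hz
        refine ⟨?_, he⟩
        rw [hT', Finset.mem_filter]
        refine ⟨mem_TB.mpr (hx0.2 hz), ?_⟩
        rw [he]
        exact hx0.2
    have hcard : (T'.filter (fun x => dualCluster ω x = dualCluster ω x0)).card
        = (dualCluster ω x0).ncard := by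
      rw [← Set.ncard_coe_finset, hfibeq]
    have hne : (dualCluster ω x0).ncard ≠ 0 := by
      have hfin : (dualCluster ω x0).Finite := (BnZ_finite d n).subset hx0.2
      have := (Set.ncard_pos hfin).mpr ⟨x0, mem_dualCluster_self ω x0⟩
      omega
    calc ∑ x ∈ T'.filter (fun x => dualCluster ω x = dualCluster ω x0),
            ((dualCluster ω x).ncard : ℝ)⁻¹
        = ∑ x ∈ T'.filter (fun x => dualCluster ω x = dualCluster ω x0),
            ((dualCluster ω x0).ncard : ℝ)⁻¹ := by
          refine Finset.sum_congr rfl fun x hx => ?_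
          rw [Finset.mem_filter] at hx
          rw [hx.2]
      _ = ((T'.filter (fun x => dualCluster ω x = dualCluster ω x0)).card : ℝ)
            * ((dualCluster ω x0).ncard : ℝ)⁻¹ := by
          rw [Finset.sum_const, nsmul_eq_mul]
      _ = 1 := by
          rw [hcard]
          rw [mul_inv_cancel₀]
          exact_mod_cast hne
  rw [hsum, hfib, Finset.sum_const, nsmul_eq_mul, mul_one]
  congr 1
  rw [hS, Set.ncard_coe_finset]

end Aux4
section Aux5
open scoped Classical
variable {d : ℕ}

def cshift (v : Fin d → ℤ) (c : Cube d) : Cube d := fun i => ((c i).1 + v i, (c i).2)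

lemma cshift_isFace {v : Fin d → ℤ} {c : Cube d} (h : IsFace c) : IsFace (cshift v c) := h

lemma cshift_neg_cshift (v : Fin d → ℤ) (c : Cube d) : cshift (-v) (cshift v c) = c := by
  funext i
  simp [cshift]

lemma cshift_cshift_neg (v : Fin d → ℤ) (c : Cube d) : cshift v (cshift (-v) c) = c := by
  funext i
  simp [cshift]

def eShift (v : Fin d → ℤ) : Face d ≃ Face d where
  toFun Q := ⟨cshift v Q.1, cshift_isFace Q.2⟩
  invFun Q := ⟨cshift (-v) Q.1, cshift_isFace Q.2⟩
  left_inv Q := Subtype.ext (cshift_neg_cshift v Q.1)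
  right_inv Q := Subtype.ext (cshift_cshift_neg v Q.1)

lemma faceBetween_shift (v a b : Fin d → ℤ) :
    faceBetween (a + v) (b + v) = cshift v (faceBetween a b) := by
  funext i
  simp only [faceBetween, cshift, Pi.add_apply]
  by_cases h : a i = b i
  · rw [if_pos (by omega : a i + v i = b i + v i), if_pos h]
  · rw [if_neg (by omega : ¬ a i + v i = b i + v i), if_neg h]
    rw [max_add_add_right]

lemma adjZ_shift (v a b : Fin d → ℤ) : adjZ (a + v) (b + v) ↔ adjZ a b := by
  unfold adjZ
  simp [Pi.add_apply, add_sub_add_comm]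

lemma dualOpen_shift (ω : Face d → Bool) (v a b : Fin d → ℤ) :
    dualOpen (fun Q => ω (eShift v Q)) a b ↔ dualOpen ω (a + v) (b + v) := by
  unfold dualOpen
  rw [adjZ_shift, faceBetween_shift]
  constructor
  · rintro ⟨hadj, hQ⟩
    refine ⟨hadj, fun Q hfb => ?_⟩
    have : Q = eShift v ((eShift v).symm Q) := ((eShift v).apply_symm_apply Q).symm
    rw [this]
    refine hQ ((eShift v).symm Q) ?_
    have : ((eShift v).symm Q).1 = cshift (-v) Q.1 := rfl
    rw [this, hfb, cshift_neg_cshift]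
  · rintro ⟨hadj, hQ⟩
    refine ⟨hadj, fun Q hfb => ?_⟩
    refine hQ (eShift v Q) ?_
    have : (eShift v Q).1 = cshift v Q.1 := rfl
    rw [this, hfb]

lemma dualCluster_shift (ω : Face d → Bool) (v x y : Fin d → ℤ) :
    y ∈ dualCluster (fun Q => ω (eShift v Q)) x ↔ y + v ∈ dualCluster ω (x + v) := by
  constructor
  · intro h
    exact Relation.ReflTransGen.lift (fun z => z + v)
      (fun a b hab => (dualOpen_shift ω v a b).mp hab) _ _ h
  · intro h
    have h2 : Relation.ReflTransGen (dualOpen (fun Q => ω (eShift v Q))) (x + v - v) (y + v - v) :=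
      Relation.ReflTransGen.lift (fun z => z - v)
        (fun a b hab => (dualOpen_shift ω v (a - v) (b - v)).mpr (by simpa using hab)) _ _ h
    simpa [dualCluster] using h2

lemma dualCluster_shift_eq (ω : Face d → Bool) (v x : Fin d → ℤ) :
    dualCluster ω (x + v) = (fun z => z + v) '' dualCluster (fun Q => ω (eShift v Q)) x := by
  ext y
  constructor
  · intro h
    refine ⟨y - v, ?_, by simp⟩
    rw [dualCluster_shift]
    simpa using h
  · rintro ⟨z, hz, rfl⟩
    exact (dualCluster_shift ω v x z).mp hz

lemma locInv_shift (m : ℕ) (x : Fin d → ℤ) (ω : Face d → Bool) :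
    locInv m x ω = locInv m 0 (fun Q => ω (eShift x Q)) := by
  have hx : x = (0 : Fin d → ℤ) + x := by simp
  have hset : dualCluster ω x = (fun z => z + x) '' dualCluster (fun Q => ω (eShift x Q)) 0 := by
    conv_lhs => rw [hx]
    exact dualCluster_shift_eq ω x 0
  have hcond : dualCluster ω x ⊆ boxZ x m ↔
      dualCluster (fun Q => ω (eShift x Q)) 0 ⊆ boxZ 0 m := by
    rw [hset]
    constructor
    · intro h z hz
      have := h ⟨z, hz, rfl⟩
      intro i
      have h2 := this i
      simp only [Pi.add_apply] at h2
      simpa using h2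
    · rintro h y ⟨z, hz, rfl⟩
      intro i
      have h2 := h hz i
      simp only [Pi.zero_apply, sub_zero] at h2
      simp only [Pi.add_apply]
      simpa using h2
  have hcard : (dualCluster ω x).ncard = (dualCluster (fun Q => ω (eShift x Q)) 0).ncard := by
    rw [hset]
    exact Set.ncard_image_of_injective _ (fun a b hab => by simpa using hab)
  unfold locInv
  by_cases hc : dualCluster ω x ⊆ boxZ x m
  · rw [if_pos hc, if_pos (hcond.mp hc), hcard]
  · rw [if_neg hc, if_neg (fun h => hc (hcond.mpr h))]

end Aux5
section Meas
open scoped Classical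
open MeasureTheory

variable {I : Type*}

/-- Cylinder event. -/
def cylEvent (F : Finset I) (b : I → Bool) : Set (I → Bool) := {ω | ∀ i ∈ F, ω i = b i}

lemma measurableSet_cylEvent (F : Finset I) (b : I → Bool) :
    MeasurableSet (cylEvent F b) := by
  have h : cylEvent F b = ⋂ i ∈ (F : Set I), (fun ω : I → Bool => ω i) ⁻¹' {b i} := by
    ext ω
    simp [cylEvent]
  rw [h]
  exact Set.Finite.measurableSet_biInter F.finite_toSet
    (fun i _ => (measurable_pi_apply i) (measurableSet_singleton (b i)))

/-- Extend a partial configuration by `false`. -/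
def extFun (F : Finset I) (η : ↥F → Bool) : I → Bool :=
  fun i => if h : i ∈ F then η ⟨i, h⟩ else false

lemma extFun_mem {F : Finset I} (η : ↥F → Bool) {i : I} (hi : i ∈ F) :
    extFun F η i = η ⟨i, hi⟩ := by
  simp [extFun, hi]

lemma bern_cyl {p : ℝ} {μ : Measure (I → Bool)} (hμ : IsBernoulliProduct p μ)
    (F : Finset I) (b : I → Bool) :
    μ (cylEvent F b)
      = ∏ i ∈ F, (if b i = true then ENNReal.ofReal p else ENNReal.ofReal (1 - p)) :=
  hμ.2 F b

/-- Pointwise decomposition of a local function over cylinders. -/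
lemma dep_decomp (F : Finset I) (g : (I → Bool) → ℝ)
    (hg : ∀ ω ω', (∀ i ∈ F, ω i = ω' i) → g ω = g ω') (ω : I → Bool) :
    g ω = ∑ η : ↥F → Bool,
      (cylEvent F (extFun F η)).indicator (fun _ => g (extFun F η)) ω := by
  classical
  set η₀ : ↥F → Bool := fun q => ω q.1 with hη₀
  have hmem : ω ∈ cylEvent F (extFun F η₀) := by
    intro i hi
    rw [extFun_mem η₀ hi]
  rw [Finset.sum_eq_single η₀]
  · rw [Set.indicator_of_mem hmem]
    exact hg ω (extFun F η₀) (fun i hi => (extFun_mem η₀ hi).symm) 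
  · intro η _ hne
    rw [Set.indicator_of_notMem]
    intro hmem'
    apply hne
    funext q
    have := hmem' q.1 q.2
    rw [extFun_mem η q.2] at this
    rw [hη₀]
    rw [← this]
  · intro h
    exact absurd (Finset.mem_univ η₀) h

lemma measurable_dep (F : Finset I) (g : (I → Bool) → ℝ)
    (hg : ∀ ω ω', (∀ i ∈ F, ω i = ω' i) → g ω = g ω') : Measurable g := by
  have h : g = (fun η : ↥F → Bool => g (extFun F η)) ∘ (fun ω (q : ↥F) => ω q.1) := by
    funext ω
    exact hg ω (extFun F (fun q => ω q.1))
      (fun i hi => (extFun_mem (F := F) (fun q => ω q.1) hi).symm)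
  rw [h]
  exact (measurable_of_countable _).comp (measurable_pi_lambda _ fun q => measurable_pi_apply q.1)

lemma integral_dep (μ : Measure (I → Bool)) [IsProbabilityMeasure μ] (F : Finset I)
    (g : (I → Bool) → ℝ)
    (hg : ∀ ω ω', (∀ i ∈ F, ω i = ω' i) → g ω = g ω') :
    ∫ ω, g ω ∂μ
      = ∑ η : ↥F → Bool, g (extFun F η) * (μ (cylEvent F (extFun F η))).toReal := by
  rw [integral_congr_ae (Filter.Eventually.of_forall (dep_decomp F g hg))]
  rw [integral_finset_sum _ (fun η _ =>
    (integrable_const (g (extFun F η))).indicator (measurableSet_cylEvent F (extFun F η)))]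
  refine Finset.sum_congr rfl fun η _ => ?_
  rw [integral_indicator_const _ (measurableSet_cylEvent F (extFun F η))]
  rw [smul_eq_mul, mul_comm]
  rfl

/-- All Bernoulli(p) product measures give the same integral to local functions. -/
lemma integral_dep_bern_eq {p : ℝ} {μ ν : Measure (I → Bool)}
    (hμ : IsBernoulliProduct p μ) (hν : IsBernoulliProduct p ν) (F : Finset I)
    (g : (I → Bool) → ℝ)
    (hg : ∀ ω ω', (∀ i ∈ F, ω i = ω' i) → g ω = g ω') :
    ∫ ω, g ω ∂μ = ∫ ω, g ω ∂ν := by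
  have h1 := hμ.1
  have h2 := hν.1
  rw [integral_dep μ F g hg, integral_dep ν F g hg]
  refine Finset.sum_congr rfl fun η _ => ?_
  rw [show μ (cylEvent F (extFun F η)) = ν (cylEvent F (extFun F η)) from by
    rw [bern_cyl hμ F (extFun F η), bern_cyl hν F (extFun F η)]]

/-- Splitting a disjoint union of coordinates. -/
def splitEquiv (F₁ F₂ : Finset I) (hdis : Disjoint F₁ F₂) :
    (↥(F₁ ∪ F₂) → Bool) ≃ (↥F₁ → Bool) × (↥F₂ → Bool) where
  toFun η := (fun q => η ⟨q.1, Finset.subset_union_left q.2⟩,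
              fun q => η ⟨q.1, Finset.subset_union_right q.2⟩)
  invFun ηp q :=
    if h : q.1 ∈ F₁ then ηp.1 ⟨q.1, h⟩
    else ηp.2 ⟨q.1, (Finset.mem_union.mp q.2).resolve_left h⟩
  left_inv η := by
    funext q
    by_cases h : q.1 ∈ F₁
    · simp only [dif_pos h]
    · simp only [dif_neg h]
  right_inv ηp := by
    refine Prod.ext ?_ ?_
    · funext q
      simp only [dif_pos q.2]
    · funext q
      have h : q.1 ∉ F₁ := fun hc => (Finset.disjoint_left.mp hdis hc) q.2
      simp only [dif_neg h]

lemma splitEquiv_fst {F₁ F₂ : Finset I} (hdis : Disjoint F₁ F₂) (η : ↥(F₁ ∪ F₂) → Bool)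
    (q : ↥F₁) :
    (splitEquiv F₁ F₂ hdis η).1 q = η ⟨q.1, Finset.subset_union_left q.2⟩ := rfl

lemma splitEquiv_snd {F₁ F₂ : Finset I} (hdis : Disjoint F₁ F₂) (η : ↥(F₁ ∪ F₂) → Bool)
    (q : ↥F₂) :
    (splitEquiv F₁ F₂ hdis η).2 q = η ⟨q.1, Finset.subset_union_right q.2⟩ := rfl

/-- Independence for disjointly-supported local functions under a Bernoulli product measure. -/
lemma integral_mul_dep {p : ℝ} {μ : Measure (I → Bool)} (hμ : IsBernoulliProduct p μ)
    (F₁ F₂ : Finset I) (hdis : Disjoint F₁ F₂) (g₁ g₂ : (I → Bool) → ℝ)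
    (hg₁ : ∀ ω ω', (∀ i ∈ F₁, ω i = ω' i) → g₁ ω = g₁ ω')
    (hg₂ : ∀ ω ω', (∀ i ∈ F₂, ω i = ω' i) → g₂ ω = g₂ ω') :
    ∫ ω, g₁ ω * g₂ ω ∂μ = (∫ ω, g₁ ω ∂μ) * ∫ ω, g₂ ω ∂μ := by
  classical
  have hP := hμ.1
  have hsub₁ : F₁ ⊆ F₁ ∪ F₂ := Finset.subset_union_left
  have hsub₂ : F₂ ⊆ F₁ ∪ F₂ := Finset.subset_union_right
  have hg : ∀ ω ω', (∀ i ∈ F₁ ∪ F₂, ω i = ω' i) → g₁ ω * g₂ ω = g₁ ω' * g₂ ω' := by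
    intro ω ω' h
    rw [hg₁ ω ω' (fun i hi => h i (hsub₁ hi)), hg₂ ω ω' (fun i hi => h i (hsub₂ hi))]
  set e := splitEquiv F₁ F₂ hdis with he
  rw [integral_dep μ (F₁ ∪ F₂) _ hg, integral_dep μ F₁ g₁ hg₁, integral_dep μ F₂ g₂ hg₂]
  rw [Finset.sum_mul_sum]
  rw [← Fintype.sum_prod_type (f := fun ηp : (↥F₁ → Bool) × (↥F₂ → Bool) =>
      (g₁ (extFun F₁ ηp.1) * (μ (cylEvent F₁ (extFun F₁ ηp.1))).toReal) *
      (g₂ (extFun F₂ ηp.2) * (μ (cylEvent F₂ (extFun F₂ ηp.2))).toReal))]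
  refine Fintype.sum_equiv e _ _ (fun η => ?_)
  have hag₁ : ∀ i ∈ F₁, extFun (F₁ ∪ F₂) η i = extFun F₁ (e η).1 i := by
    intro i hi
    rw [extFun_mem η (hsub₁ hi), extFun_mem (e η).1 hi, he, splitEquiv_fst]
  have hag₂ : ∀ i ∈ F₂, extFun (F₁ ∪ F₂) η i = extFun F₂ (e η).2 i := by
    intro i hi
    rw [extFun_mem η (hsub₂ hi), extFun_mem (e η).2 hi, he, splitEquiv_snd]
  have k1 : g₁ (extFun (F₁ ∪ F₂) η) = g₁ (extFun F₁ (e η).1) := hg₁ _ _ hag₁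
  have k2 : g₂ (extFun (F₁ ∪ F₂) η) = g₂ (extFun F₂ (e η).2) := hg₂ _ _ hag₂
  have k3 : (μ (cylEvent (F₁ ∪ F₂) (extFun (F₁ ∪ F₂) η))).toReal
      = (μ (cylEvent F₁ (extFun F₁ (e η).1))).toReal
        * (μ (cylEvent F₂ (extFun F₂ (e η).2))).toReal := by
    rw [bern_cyl hμ (F₁ ∪ F₂) _, bern_cyl hμ F₁ _, bern_cyl hμ F₂ _]
    rw [Finset.prod_union hdis, ENNReal.toReal_mul]
    congr 1
    · rw [ENNReal.toReal_prod, ENNReal.toReal_prod]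
      exact Finset.prod_congr rfl fun i hi => by rw [hag₁ i hi]
    · rw [ENNReal.toReal_prod, ENNReal.toReal_prod]
      exact Finset.prod_congr rfl fun i hi => by rw [hag₂ i hi]
  rw [k1, k2, k3]
  ring

end Meas
section Aux7
open scoped Classical
open MeasureTheory

variable {d : ℕ} {p : ℝ} {μ : Measure (Face d → Bool)}

/-- The finite dependence set as a Finset. -/
def depF (x : Fin d → ℤ) (m : ℕ) : Finset (Face d) := (depFaces_finite x m).toFinset

lemma locInv_depF {m : ℕ} {x : Fin d → ℤ} :
    ∀ ω ω' : Face d → Bool, (∀ Q ∈ depF x m, ω Q = ω' Q) → locInv m x ω = locInv m x ω' := by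
  intro ω ω' h
  exact locInv_dep (fun Q hQ => h Q ((depFaces_finite x m).mem_toFinset.mpr hQ))

lemma measurable_locInv (m : ℕ) (x : Fin d → ℤ) :
    Measurable (locInv m x : (Face d → Bool) → ℝ) :=
  measurable_dep (depF x m) _ locInv_depF

lemma integrable_locInv [IsProbabilityMeasure μ] (m : ℕ) (x : Fin d → ℤ) :
    Integrable (locInv m x) μ := by
  refine Integrable.mono' (integrable_const 1) (measurable_locInv m x).aestronglyMeasurable ?_
  refine Filter.Eventually.of_forall fun ω => ?_
  rw [Real.norm_eq_abs, abs_of_nonneg (locInv_nonneg m x ω)]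
  exact locInv_le_one m x ω

lemma measurable_shiftMap (x : Fin d → ℤ) :
    Measurable (fun (ω : Face d → Bool) (Q : Face d) => ω (eShift x Q)) :=
  measurable_pi_lambda _ fun Q => measurable_pi_apply _

lemma map_shift_bern (hμ : IsBernoulliProduct p μ) (x : Fin d → ℤ) :
    IsBernoulliProduct p
      (Measure.map (fun (ω : Face d → Bool) (Q : Face d) => ω (eShift x Q)) μ) := by
  have hP := hμ.1
  have hT := measurable_shiftMap (d := d) x
  constructor
  · exact Measure.isProbabilityMeasure_map hT.aemeasurable
  · intro s b
    rw [show {ω : Face d → Bool | ∀ i ∈ s, ω i = b i} = cylEvent s b from rfl]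
    rw [Measure.map_apply hT (measurableSet_cylEvent s b)]
    have hpre : (fun (ω : Face d → Bool) (Q : Face d) => ω (eShift x Q)) ⁻¹'
        (cylEvent s b)
        = cylEvent (s.image (eShift x)) (fun Q => b ((eShift x).symm Q)) := by
      ext ω
      constructor
      · intro h j hj
        obtain ⟨i, hi, rfl⟩ := Finset.mem_image.mp hj
        show ω ((eShift x) i) = b ((eShift x).symm ((eShift x) i))
        rw [Equiv.symm_apply_apply]
        exact h i hi
      · intro h i hi
        have h2 := h (eShift x i) (Finset.mem_image_of_mem _ hi)
        simp only [Equiv.symm_apply_apply] at h2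
        exact h2
    rw [hpre, bern_cyl hμ]
    rw [Finset.prod_image (fun a _ b _ hab => (eShift x).injective hab)]
    refine Finset.prod_congr rfl fun i _ => by rw [Equiv.symm_apply_apply]

/-- Translation invariance of the mean of the local observable. -/
lemma locInv_avg (hμ : IsBernoulliProduct p μ) (m : ℕ) (x : Fin d → ℤ) :
    ∫ ω, locInv m x ω ∂μ = ∫ ω, locInv m 0 ω ∂μ := by
  have hP := hμ.1
  have hT := measurable_shiftMap (d := d) x
  calc ∫ ω, locInv m x ω ∂μ
      = ∫ ω, locInv m 0 (fun Q => ω (eShift x Q)) ∂μ :=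
        integral_congr_ae (Filter.Eventually.of_forall fun ω => locInv_shift m x ω)
    _ = ∫ ω', locInv m 0 ω' ∂(Measure.map
          (fun (ω : Face d → Bool) (Q : Face d) => ω (eShift x Q)) μ) := by
        rw [integral_map hT.aemeasurable (measurable_locInv m 0).aestronglyMeasurable]
    _ = ∫ ω', locInv m 0 ω' ∂μ := by
        have hBP := map_shift_bern hμ x
        have : IsProbabilityMeasure (Measure.map
          (fun (ω : Face d → Bool) (Q : Face d) => ω (eShift x Q)) μ) := hBP.1
        exact integral_dep_bern_eq hBP hμ (depF 0 m) _ locInv_depF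

/-- Decorrelation of distant local observables. -/
lemma locInv_indep (hμ : IsBernoulliProduct p μ) (m : ℕ) {x y : Fin d → ℤ} (i : Fin d)
    (hfar : 2 * (m : ℤ) + 3 ≤ |x i - y i|) :
    ∫ ω, locInv m x ω * locInv m y ω ∂μ
      = (∫ ω, locInv m x ω ∂μ) * ∫ ω, locInv m y ω ∂μ := by
  refine integral_mul_dep hμ (depF x m) (depF y m) ?_ _ _ locInv_depF locInv_depF
  rw [depF, depF, Set.Finite.disjoint_toFinset]
  exact depFaces_disjoint i hfar

lemma mem_boxZ_of_distX {x z : Fin d → ℤ} {m : ℕ} (h : distX x z ≤ m) : z ∈ boxZ x m := by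
  intro i
  have h2 : (z i - x i).natAbs ≤ distX x z :=
    Finset.le_sup (f := fun j => (z j - x j).natAbs) (Finset.mem_univ i)
  rw [Int.abs_eq_natAbs]
  exact_mod_cast le_trans h2 h

lemma tendsto_locInv_globInv (ω : Face d → Bool) :
    Filter.Tendsto (fun m => locInv m (0 : Fin d → ℤ) ω) Filter.atTop
      (nhds (globInv 0 ω)) := by
  by_cases hfin : (dualCluster ω (0 : Fin d → ℤ)).Finite
  · have hbd : ∃ m₀ : ℕ, ∀ z ∈ dualCluster ω (0 : Fin d → ℤ), distX 0 z ≤ m₀ := by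
      refine ⟨hfin.toFinset.sup (fun z => distX 0 z), fun z hz => ?_⟩
      exact Finset.le_sup (hfin.mem_toFinset.mpr hz)
    obtain ⟨m₀, hm₀⟩ := hbd
    refine tendsto_const_nhds.congr' ?_
    rw [Filter.EventuallyEq, Filter.eventually_atTop]
    refine ⟨m₀, fun m hm => ?_⟩
    have hsub : dualCluster ω (0 : Fin d → ℤ) ⊆ boxZ 0 m :=
      fun z hz => mem_boxZ_of_distX (le_trans (hm₀ z hz) hm)
    unfold globInv locInv
    rw [if_pos hsub]
  · have hz : ∀ m : ℕ, locInv m (0 : Fin d → ℤ) ω = 0 := by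
      intro m
      unfold locInv
      rw [if_neg]
      intro hsub
      exact hfin ((boxZ_finite 0 m).subset hsub)
    have hg : globInv (0 : Fin d → ℤ) ω = 0 := by
      unfold globInv
      rw [Set.Infinite.ncard hfin]
      norm_num
    rw [hg]
    refine tendsto_const_nhds.congr fun m => (hz m).symm

lemma measurable_globInv : Measurable (globInv (0 : Fin d → ℤ) : (Face d → Bool) → ℝ) := by
  refine measurable_of_tendsto_metrizable' Filter.atTop
    (fun m => measurable_locInv m 0) ?_
  exact tendsto_pi_nhds.mpr fun ω => tendsto_locInv_globInv ω

lemma integrable_globInv [IsProbabilityMeasure μ] :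
    Integrable (globInv (0 : Fin d → ℤ)) μ := by
  refine Integrable.mono' (integrable_const 1) measurable_globInv.aestronglyMeasurable ?_
  refine Filter.Eventually.of_forall fun ω => ?_
  rw [Real.norm_eq_abs, abs_of_nonneg (globInv_nonneg 0 ω)]
  exact globInv_le_one 0 ω

lemma kappa_bounds (hμ : IsBernoulliProduct p μ) (m : ℕ) :
    ∫ ω, locInv m (0 : Fin d → ℤ) ω ∂μ ≤ ∫ ω, globInv (0 : Fin d → ℤ) ω ∂μ ∧
    ∫ ω, globInv (0 : Fin d → ℤ) ω ∂μ
      ≤ ∫ ω, locInv m (0 : Fin d → ℤ) ω ∂μ + ((m : ℝ) + 1)⁻¹ := by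
  have hP := hμ.1
  constructor
  · exact integral_mono (integrable_locInv m 0) integrable_globInv
      (fun ω => locInv_le_globInv)
  · have h1 : ∫ ω, (locInv m (0 : Fin d → ℤ) ω + ((m : ℝ) + 1)⁻¹) ∂μ
        = ∫ ω, locInv m (0 : Fin d → ℤ) ω ∂μ + ((m : ℝ) + 1)⁻¹ := by
      rw [integral_add (integrable_locInv m 0) (integrable_const _), integral_const]
      simp
    rw [← h1]
    exact integral_mono integrable_globInv
      ((integrable_locInv m 0).add (integrable_const _))
      (fun ω => globInv_le_locInv_add)

end Aux7
section Aux8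
open scoped Classical
open MeasureTheory

variable {d : ℕ} {p : ℝ} {μ : Measure (Face d → Bool)}

lemma integrable_mul_locInv [IsProbabilityMeasure μ] (m : ℕ) (x y : Fin d → ℤ) :
    Integrable (fun ω => locInv m x ω * locInv m y ω) μ := by
  refine Integrable.mono' (integrable_const 1)
    ((measurable_locInv m x).mul (measurable_locInv m y)).aestronglyMeasurable ?_
  refine Filter.Eventually.of_forall fun ω => ?_
  rw [Real.norm_eq_abs, abs_mul, abs_of_nonneg (locInv_nonneg m x ω),
    abs_of_nonneg (locInv_nonneg m y ω)]
  exact mul_le_one₀ (locInv_le_one m x ω) (locInv_nonneg m y ω) (locInv_le_one m y ω)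

lemma integral_mul_locInv_le [IsProbabilityMeasure μ] (m : ℕ) (x y : Fin d → ℤ) :
    ∫ ω, locInv m x ω * locInv m y ω ∂μ ≤ 1 := by
  have h := integral_mono (integrable_mul_locInv (μ := μ) m x y) (integrable_const 1)
    (fun ω => mul_le_one₀ (locInv_le_one m x ω) (locInv_nonneg m y ω) (locInv_le_one m y ω))
  simpa using h

lemma integral_locInv_nonneg [IsProbabilityMeasure μ] (m : ℕ) (x : Fin d → ℤ) :
    0 ≤ ∫ ω, locInv m x ω ∂μ :=
  integral_nonneg (fun ω => locInv_nonneg m x ω)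

lemma memLp_S (m n : ℕ) [IsProbabilityMeasure μ] :
    MemLp (fun ω => ∑ x ∈ TB d n, locInv m x ω) 2 μ := by
  refine MemLp.of_bound ?_ ((TB d n).card : ℝ) ?_
  · exact (Finset.measurable_sum _ (fun x _ => measurable_locInv m x)).aestronglyMeasurable
  · refine Filter.Eventually.of_forall fun ω => ?_
    rw [Real.norm_eq_abs, abs_of_nonneg (Finset.sum_nonneg fun x _ => locInv_nonneg m x ω)]
    calc ∑ x ∈ TB d n, locInv m x ω ≤ ∑ x ∈ TB d n, 1 :=
          Finset.sum_le_sum fun x _ => locInv_le_one m x ω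
      _ = ((TB d n).card : ℝ) := by rw [Finset.sum_const, nsmul_eq_mul, mul_one]

lemma card_near_le (n m : ℕ) :
    (((TB d n) ×ˢ (TB d n)).filter (fun q : (Fin d → ℤ) × (Fin d → ℤ) =>
      ∀ i, |q.1 i - q.2 i| ≤ 2 * (m : ℤ) + 2)).card ≤ (TB d n).card * (4 * m + 5) ^ d := by
  classical
  rw [Finset.card_eq_sum_card_fiberwise (f := Prod.fst) (t := TB d n)
    (fun q hq => (Finset.mem_product.mp (Finset.mem_filter.mp hq).1).1)]
  have hbound : ∀ x ∈ TB d n,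
      ((((TB d n) ×ˢ (TB d n)).filter (fun q : (Fin d → ℤ) × (Fin d → ℤ) =>
        ∀ i, |q.1 i - q.2 i| ≤ 2 * (m : ℤ) + 2)).filter
          (fun q => q.1 = x)).card ≤ (4 * m + 5) ^ d := by
    intro x _
    have hmap : ∀ q ∈ (((TB d n) ×ˢ (TB d n)).filter (fun q : (Fin d → ℤ) × (Fin d → ℤ) =>
        ∀ i, |q.1 i - q.2 i| ≤ 2 * (m : ℤ) + 2)).filter (fun q => q.1 = x),
        q.2 ∈ Fintype.piFinset (fun i => Finset.Icc (x i - (2 * m + 2)) (x i + (2 * m + 2))) := by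
      intro q hq
      rw [Finset.mem_filter] at hq
      obtain ⟨hq1, hq2⟩ := hq
      rw [Finset.mem_filter] at hq1
      rw [Fintype.mem_piFinset]
      intro i
      have h3 := hq1.2 i
      rw [hq2] at h3
      rw [abs_le] at h3
      rw [Finset.mem_Icc]
      push_cast
      omega
    have hinj : ∀ q ∈ (((TB d n) ×ˢ (TB d n)).filter (fun q : (Fin d → ℤ) × (Fin d → ℤ) =>
        ∀ i, |q.1 i - q.2 i| ≤ 2 * (m : ℤ) + 2)).filter (fun q => q.1 = x),
        ∀ r ∈ (((TB d n) ×ˢ (TB d n)).filter (fun q : (Fin d → ℤ) × (Fin d → ℤ) =>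
        ∀ i, |q.1 i - q.2 i| ≤ 2 * (m : ℤ) + 2)).filter (fun q => q.1 = x),
        q.2 = r.2 → q = r := by
      intro q hq r hr he
      rw [Finset.mem_filter] at hq hr
      exact Prod.ext (hq.2.trans hr.2.symm) he
    calc _ ≤ (Fintype.piFinset (fun i => Finset.Icc (x i - (2 * m + 2))
          (x i + (2 * m + 2)))).card := Finset.card_le_card_of_injOn _ hmap hinj
      _ = (4 * m + 5) ^ d := by
          rw [Fintype.card_piFinset]
          rw [Finset.prod_congr rfl (fun i _ => by
            rw [Int.card_Icc, show x i + (2 * (m : ℤ) + 2) + 1 - (x i - (2 * m + 2))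
              = (4 * m + 5 : ℕ) from by push_cast; ring])]
          rw [Finset.prod_const, Finset.card_univ, Fintype.card_fin]
          rw [Int.toNat_natCast]
  calc ∑ x ∈ TB d n, _ ≤ ∑ x ∈ TB d n, (4 * m + 5) ^ d := Finset.sum_le_sum hbound
    _ = (TB d n).card * (4 * m + 5) ^ d := by rw [Finset.sum_const, smul_eq_mul]

lemma variance_S_le (hμ : IsBernoulliProduct p μ) (m n : ℕ) :
    ProbabilityTheory.variance (fun ω => ∑ x ∈ TB d n, locInv m x ω) μ
      ≤ ((TB d n).card : ℝ) * ((4 * m + 5 : ℕ) : ℝ) ^ d := by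
  classical
  have hP := hμ.1
  rw [ProbabilityTheory.variance_eq_sub (memLp_S m n)]
  have hsq : ∫ ω, ((fun ω => ∑ x ∈ TB d n, locInv m x ω) ^ 2) ω ∂μ
      = ∑ q ∈ (TB d n) ×ˢ (TB d n), ∫ ω, locInv m q.1 ω * locInv m q.2 ω ∂μ := by
    have h1 : ∀ ω : Face d → Bool, ((fun ω => ∑ x ∈ TB d n, locInv m x ω) ^ 2) ω
        = ∑ q ∈ (TB d n) ×ˢ (TB d n), locInv m q.1 ω * locInv m q.2 ω := by
      intro ω
      rw [Pi.pow_apply, sq, Finset.sum_mul_sum]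
      rw [Finset.sum_product]
    rw [integral_congr_ae (Filter.Eventually.of_forall h1)]
    exact integral_finset_sum _ (fun q _ => integrable_mul_locInv m q.1 q.2)
  have hmean : (∫ ω, (∑ x ∈ TB d n, locInv m x ω) ∂μ) ^ 2
      = ∑ q ∈ (TB d n) ×ˢ (TB d n),
          (∫ ω, locInv m q.1 ω ∂μ) * ∫ ω, locInv m q.2 ω ∂μ := by
    rw [integral_finset_sum _ (fun x _ => integrable_locInv m x), sq, Finset.sum_mul_sum]
    rw [Finset.sum_product]
  rw [hsq, hmean, ← Finset.sum_sub_distrib]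
  have hterm : ∀ q ∈ (TB d n) ×ˢ (TB d n),
      (∫ ω, locInv m q.1 ω * locInv m q.2 ω ∂μ)
        - (∫ ω, locInv m q.1 ω ∂μ) * ∫ ω, locInv m q.2 ω ∂μ
      ≤ if (∀ i, |q.1 i - q.2 i| ≤ 2 * (m : ℤ) + 2) then 1 else 0 := by
    intro q _
    by_cases hnear : ∀ i, |q.1 i - q.2 i| ≤ 2 * (m : ℤ) + 2
    · rw [if_pos hnear]
      have h1 := integral_mul_locInv_le (μ := μ) m q.1 q.2
      have h2 := mul_nonneg (integral_locInv_nonneg (μ := μ) m q.1)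
        (integral_locInv_nonneg (μ := μ) m q.2)
      linarith
    · rw [if_neg hnear]
      push_neg at hnear
      obtain ⟨i, hi⟩ := hnear
      have hfar : 2 * (m : ℤ) + 3 ≤ |q.1 i - q.2 i| := by omega
      rw [locInv_indep hμ m i hfar]
      simp
  calc ∑ q ∈ (TB d n) ×ˢ (TB d n), ((∫ ω, locInv m q.1 ω * locInv m q.2 ω ∂μ)
        - (∫ ω, locInv m q.1 ω ∂μ) * ∫ ω, locInv m q.2 ω ∂μ)
      ≤ ∑ q ∈ (TB d n) ×ˢ (TB d n),
          (if (∀ i, |q.1 i - q.2 i| ≤ 2 * (m : ℤ) + 2) then (1:ℝ) else 0) :=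
        Finset.sum_le_sum hterm
    _ = ((((TB d n) ×ˢ (TB d n)).filter (fun q : (Fin d → ℤ) × (Fin d → ℤ) =>
          ∀ i, |q.1 i - q.2 i| ≤ 2 * (m : ℤ) + 2)).card : ℝ) := by
        rw [Finset.sum_boole]
    _ ≤ ((TB d n).card : ℝ) * ((4 * m + 5 : ℕ) : ℝ) ^ d := by
        have h := card_near_le (d := d) n m
        calc ((((TB d n) ×ˢ (TB d n)).filter (fun q : (Fin d → ℤ) × (Fin d → ℤ) =>
              ∀ i, |q.1 i - q.2 i| ≤ 2 * (m : ℤ) + 2)).card : ℝ)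
            ≤ (((TB d n).card * (4 * m + 5) ^ d : ℕ) : ℝ) := Nat.cast_le.mpr h
          _ = ((TB d n).card : ℝ) * ((4 * m + 5 : ℕ) : ℝ) ^ d := by push_cast; ring

end Aux8
section Aux9
open scoped Classical
open MeasureTheory Filter

variable {d : ℕ} {p : ℝ} {μ : Measure (Face d → Bool)}

lemma summable_inv_sq' : Summable (fun n : ℕ => (1 : ℝ) / ((n : ℝ) + 1) ^ 2) := by
  have h1 : Summable (fun n : ℕ => (1 : ℝ) / (n : ℝ) ^ 2) :=
    Real.summable_one_div_nat_pow.mpr one_lt_two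
  have h2 := (summable_nat_add_iff 1).mpr h1
  refine h2.congr fun n => ?_
  push_cast
  ring

lemma mean_S (hμ : IsBernoulliProduct p μ) (m n : ℕ) :
    haveI := hμ.1
    ∫ ω, (∑ x ∈ TB d n, locInv m x ω) ∂μ
      = ((TB d n).card : ℝ) * ∫ ω', locInv m 0 ω' ∂μ := by
  have hP := hμ.1
  rw [integral_finset_sum _ (fun x _ => integrable_locInv m x)]
  rw [Finset.sum_congr rfl (fun x _ => locInv_avg hμ m x), Finset.sum_const, nsmul_eq_mul]

lemma card_TB_real (d n : ℕ) : ((TB d n).card : ℝ) = (2 * (n : ℝ)) ^ d := by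
  rw [card_TB]
  push_cast
  ring

lemma cheb (hd : 2 ≤ d) (hμ : IsBernoulliProduct p μ) (m k n : ℕ) :
    μ {ω | (2 * ((n : ℝ) + 1)) ^ d / ((k : ℝ) + 1)
        ≤ |(∑ x ∈ TB d (n + 1), locInv m x ω)
            - ((TB d (n + 1)).card : ℝ) * ∫ ω', locInv m 0 ω' ∂μ|}
      ≤ ENNReal.ofReal
          ((((4 * m + 5 : ℕ) : ℝ) ^ d * ((k : ℝ) + 1) ^ 2) / ((n : ℝ) + 1) ^ 2) := by
  have hP := hμ.1
  set B : ℝ := (2 * ((n : ℝ) + 1)) ^ d with hB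
  have hB1 : (1 : ℝ) ≤ 2 * ((n : ℝ) + 1) := by
    have : (0 : ℝ) ≤ (n : ℝ) := Nat.cast_nonneg n
    linarith
  have hBpos : (0 : ℝ) < B := by positivity
  have hc : (0 : ℝ) < B / ((k : ℝ) + 1) := by positivity
  have h := ProbabilityTheory.meas_ge_le_variance_div_sq (μ := μ)
    (X := fun ω => ∑ x ∈ TB d (n + 1), locInv m x ω) (memLp_S m (n + 1)) hc
  rw [mean_S hμ m (n + 1)] at h
  refine le_trans h (ENNReal.ofReal_le_ofReal ?_)
  set C : ℝ := ((4 * m + 5 : ℕ) : ℝ) ^ d with hC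
  have hCpos : (0 : ℝ) < C := by positivity
  have hvar := variance_S_le hμ m (n + 1)
  have hcard : ((TB d (n + 1)).card : ℝ) = B := by
    rw [card_TB_real]
    push_cast
    ring
  rw [hcard] at hvar
  have hvpos : (0 : ℝ) ≤ ProbabilityTheory.variance
      (fun ω => ∑ x ∈ TB d (n + 1), locInv m x ω) μ := ProbabilityTheory.variance_nonneg _ _
  have hsq : (B / ((k : ℝ) + 1)) ^ 2 = B ^ 2 / ((k : ℝ) + 1) ^ 2 := by
    rw [div_pow]
  have hstep1 : ProbabilityTheory.variance
      (fun ω => ∑ x ∈ TB d (n + 1), locInv m x ω) μ / (B / ((k : ℝ) + 1)) ^ 2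
      ≤ (B * C) / (B / ((k : ℝ) + 1)) ^ 2 := by
    exact (div_le_div_iff_of_pos_right (by positivity)).mpr hvar
  have hstep2 : (B * C) / (B / ((k : ℝ) + 1)) ^ 2 = C * ((k : ℝ) + 1) ^ 2 / B := by
    rw [hsq]
    field_simp
  have hstep3 : C * ((k : ℝ) + 1) ^ 2 / B ≤ C * ((k : ℝ) + 1) ^ 2 / ((n : ℝ) + 1) ^ 2 := by
    apply div_le_div_of_nonneg_left (by positivity) (by positivity)
    calc ((n : ℝ) + 1) ^ 2 ≤ (2 * ((n : ℝ) + 1)) ^ 2 := by nlinarith [Nat.cast_nonneg (α := ℝ) n]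
      _ ≤ B := by
          rw [hB]
          exact pow_le_pow_right₀ hB1 hd
  calc _ ≤ (B * C) / (B / ((k : ℝ) + 1)) ^ 2 := hstep1
    _ = C * ((k : ℝ) + 1) ^ 2 / B := hstep2
    _ ≤ C * ((k : ℝ) + 1) ^ 2 / ((n : ℝ) + 1) ^ 2 := hstep3
    _ = (C * ((k : ℝ) + 1) ^ 2) / ((n : ℝ) + 1) ^ 2 := rfl

lemma tendsto_avg_locInv (hd : 2 ≤ d) (hμ : IsBernoulliProduct p μ) (m : ℕ) :
    ∀ᵐ ω ∂μ, Tendsto (fun n : ℕ => (∑ x ∈ TB d n, locInv m x ω) / (2 * (n : ℝ)) ^ d)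
      atTop (nhds (∫ ω', locInv m 0 ω' ∂μ)) := by
  have hP := hμ.1
  set κm : ℝ := ∫ ω', locInv m 0 ω' ∂μ with hκm
  have key : ∀ k : ℕ, ∀ᵐ ω ∂μ, ∀ᶠ n : ℕ in atTop,
      ω ∉ {ω' : Face d → Bool | (2 * ((n : ℝ) + 1)) ^ d / ((k : ℝ) + 1)
        ≤ |(∑ x ∈ TB d (n + 1), locInv m x ω')
            - ((TB d (n + 1)).card : ℝ) * κm|} := by
    intro k
    apply ae_eventually_notMem
    set A : ℝ := ((4 * m + 5 : ℕ) : ℝ) ^ d * ((k : ℝ) + 1) ^ 2 with hA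
    have hsumm : Summable (fun n : ℕ => A / ((n : ℝ) + 1) ^ 2) := by
      have := summable_inv_sq'.mul_left A
      refine this.congr fun n => ?_
      rw [mul_one_div]
    refine ne_top_of_le_ne_top ?_ (ENNReal.tsum_le_tsum (fun n => cheb hd hμ m k n))
    rw [← ENNReal.ofReal_tsum_of_nonneg (fun n => by positivity) hsumm]
    exact ENNReal.ofReal_ne_top
  rw [← ae_all_iff] at key
  filter_upwards [key] with ω hω
  rw [Metric.tendsto_atTop]
  intro ε hε
  obtain ⟨k, hk⟩ := exists_nat_one_div_lt hε
  obtain ⟨N, hN⟩ := Filter.eventually_atTop.mp (hω k)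
  refine ⟨N + 2, fun n hn => ?_⟩
  obtain ⟨n', rfl⟩ : ∃ n', n = n' + 1 := ⟨n - 1, by omega⟩
  have h2 := hN n' (by omega)
  rw [not_le] at h2
  set B : ℝ := (2 * ((n' : ℝ) + 1)) ^ d with hB
  have hBpos : (0 : ℝ) < B := by positivity
  have hcard : ((TB d (n' + 1)).card : ℝ) = B := by
    rw [card_TB_real]
    push_cast
    ring
  rw [hcard] at h2
  rw [Real.dist_eq]
  have hden : (2 * ((n' + 1 : ℕ) : ℝ)) ^ d = B := by
    rw [hB]
    push_cast
    ring
  rw [hden]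
  have hgoal : |(∑ x ∈ TB d (n' + 1), locInv m x ω) / B - κm| < 1 / ((k : ℝ) + 1) := by
    rw [show (∑ x ∈ TB d (n' + 1), locInv m x ω) / B - κm
        = ((∑ x ∈ TB d (n' + 1), locInv m x ω) - B * κm) / B from by field_simp]
    rw [abs_div, abs_of_pos hBpos, div_lt_iff₀ hBpos]
    have : B / ((k : ℝ) + 1) = 1 / ((k : ℝ) + 1) * B := by ring
    rw [← this]
    exact h2
  exact lt_trans hgoal hk

end Aux9
section Aux10
open scoped Classical
open MeasureTheory Filter

variable {d : ℕ} {p : ℝ} {μ : Measure (Face d → Bool)}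

/-- Inner window. -/
def TBin (d n m : ℕ) : Finset (Fin d → ℤ) :=
  Fintype.piFinset fun _ => Finset.Ico (-(n : ℤ) + m) ((n : ℤ) - m)

lemma TBin_subset (d n m : ℕ) : TBin d n m ⊆ TB d n := by
  intro x hx
  rw [TBin, Fintype.mem_piFinset] at hx
  rw [TB, Fintype.mem_piFinset]
  intro i
  have := hx i
  rw [Finset.mem_Ico] at this ⊢
  omega

lemma boxZ_subset_BnZ {d n m : ℕ} {x : Fin d → ℤ} (hx : x ∈ TBin d n m) :
    boxZ x m ⊆ BnZ d n := by
  intro y hy i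
  have h1 := (Fintype.mem_piFinset.mp hx) i
  rw [Finset.mem_Ico] at h1
  have h2 := hy i
  rw [abs_le] at h2
  omega

lemma card_TBin_real {d n m : ℕ} (h : m ≤ n) :
    ((TBin d n m).card : ℝ) = (2 * ((n : ℝ) - m)) ^ d := by
  have hnat : ((n : ℤ) - m - (-(n : ℤ) + m)).toNat = 2 * (n - m) := by omega
  rw [TBin, Fintype.card_piFinset]
  rw [Finset.prod_congr rfl (fun i _ => by rw [Int.card_Ico, hnat])]
  rw [Finset.prod_const, Finset.card_univ, Fintype.card_fin]
  have : ((2 * (n - m) : ℕ) : ℝ) = 2 * ((n : ℝ) - m) := by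
    push_cast [h]
    ring
  rw [← this]
  push_cast
  ring

lemma sum_winInv_le (ω : Face d → Bool) (n m : ℕ) :
    ∑ x ∈ TB d n, winInv n x ω
      ≤ (∑ x ∈ TB d n, locInv m x ω) + ((TB d n).card : ℝ) * ((m : ℝ) + 1)⁻¹ := by
  calc ∑ x ∈ TB d n, winInv n x ω
      ≤ ∑ x ∈ TB d n, (locInv m x ω + ((m : ℝ) + 1)⁻¹) :=
        Finset.sum_le_sum fun x _ => winInv_le_locInv_add
    _ = (∑ x ∈ TB d n, locInv m x ω) + ((TB d n).card : ℝ) * ((m : ℝ) + 1)⁻¹ := by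
        rw [Finset.sum_add_distrib, Finset.sum_const, nsmul_eq_mul]

lemma sum_locInv_le (ω : Face d → Bool) (n m : ℕ) :
    ∑ x ∈ TB d n, locInv m x ω
      ≤ (∑ x ∈ TB d n, winInv n x ω)
        + (((TB d n).card : ℝ) - ((TBin d n m).card : ℝ)) := by
  have hsub := TBin_subset d n m
  have hsplit : ∑ x ∈ TB d n \ TBin d n m, locInv m x ω + ∑ x ∈ TBin d n m, locInv m x ω
      = ∑ x ∈ TB d n, locInv m x ω := Finset.sum_sdiff hsub
  have h1 : ∑ x ∈ TBin d n m, locInv m x ω ≤ ∑ x ∈ TB d n, winInv n x ω := by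
    calc ∑ x ∈ TBin d n m, locInv m x ω ≤ ∑ x ∈ TBin d n m, winInv n x ω :=
          Finset.sum_le_sum fun x hx => locInv_le_winInv (boxZ_subset_BnZ hx)
      _ ≤ ∑ x ∈ TB d n, winInv n x ω :=
          Finset.sum_le_sum_of_subset_of_nonneg hsub (fun x _ _ => winInv_nonneg n x ω)
  have h2 : ∑ x ∈ TB d n \ TBin d n m, locInv m x ω
      ≤ (((TB d n).card : ℝ) - ((TBin d n m).card : ℝ)) := by
    calc ∑ x ∈ TB d n \ TBin d n m, locInv m x ω ≤ ∑ x ∈ TB d n \ TBin d n m, 1 :=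
          Finset.sum_le_sum fun x _ => locInv_le_one m x ω
      _ = ((TB d n \ TBin d n m).card : ℝ) := by rw [Finset.sum_const, nsmul_eq_mul, mul_one]
      _ = (((TB d n).card : ℝ) - ((TBin d n m).card : ℝ)) := by
          rw [Finset.card_sdiff_of_subset hsub]
          rw [Nat.cast_sub (Finset.card_le_card hsub)]
  linarith

lemma err_tendsto (d m : ℕ) :
    Tendsto (fun n : ℕ => (((TB d n).card : ℝ) - ((TBin d n m).card : ℝ)) / (2 * (n : ℝ)) ^ d)
      atTop (nhds 0) := by
  have h1 : Tendsto (fun n : ℕ => (m : ℝ) / (n : ℝ)) atTop (nhds 0) :=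
    tendsto_const_div_atTop_nhds_zero_nat (m : ℝ)
  have h2 : Tendsto (fun n : ℕ => ((1 : ℝ) - (m : ℝ) / (n : ℝ))) atTop (nhds 1) := by
    have := tendsto_const_nhds (x := (1 : ℝ)) (f := atTop (α := ℕ)) |>.sub h1
    simpa using this
  have h3 : Tendsto (fun n : ℕ => ((1 : ℝ) - (m : ℝ) / (n : ℝ)) ^ d) atTop (nhds 1) := by
    have := h2.pow d
    simpa using this
  have hg : Tendsto (fun n : ℕ => 1 - ((1 : ℝ) - (m : ℝ) / (n : ℝ)) ^ d) atTop (nhds 0) := by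
    have := tendsto_const_nhds (x := (1 : ℝ)) (f := atTop (α := ℕ)) |>.sub h3
    simpa using this
  refine Tendsto.congr' ?_ hg
  rw [Filter.EventuallyEq, Filter.eventually_atTop]
  refine ⟨m + 1, fun n hn => ?_⟩
  have hmn : m ≤ n := by omega
  have hnpos : (0 : ℝ) < (n : ℝ) := by
    have : (1 : ℝ) ≤ (n : ℝ) := by exact_mod_cast Nat.one_le_iff_ne_zero.mpr (by omega)
    linarith
  have hne : (2 * (n : ℝ)) ^ d ≠ 0 := by positivity
  rw [card_TB_real, card_TBin_real hmn]
  have key : ((1 : ℝ) - (m : ℝ) / n) = (2 * ((n : ℝ) - m)) / (2 * (n : ℝ)) := by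
    field_simp
  rw [key, div_pow]
  field_simp

end Aux10
/-- almost surely, the number of vertices of the hole graph in the
window — i.e. the number of finite dual clusters entirely contained in `B̃(n)` —
divided by `|B̃(n)| = (2n)^d` converges to `κ(1-p) = E[|C*(0*)|⁻¹]` (with the
convention `|C|⁻¹ = 0` for infinite clusters, via `Set.ncard = 0`). -/
theorem hole_vertex_density {d : ℕ} (hd : 2 ≤ d) (p : ℝ) (hp0 : 0 ≤ p) (hp1 : p ≤ 1)
    (μ : Measure (Face d → Bool)) (hμ : IsBernoulliProduct p μ) :
    ∀ᵐ ω ∂μ, Filter.Tendsto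
      (fun n : ℕ =>
        ({C : Set (Fin d → ℤ) | (∃ x, C = dualCluster ω x) ∧ C.Finite ∧ C ⊆ BnZ d n}.ncard : ℝ)
          / (2 * (n : ℝ)) ^ d)
      Filter.atTop
      (nhds (∫ ω', ((dualCluster ω' 0).ncard : ℝ)⁻¹ ∂μ)) := by
  classical
  have hP := hμ.1
  have hκeq : (∫ ω', ((dualCluster ω' 0).ncard : ℝ)⁻¹ ∂μ)
      = ∫ ω', globInv 0 ω' ∂μ := rfl
  rw [hκeq]
  have hma : ∀ᵐ ω ∂μ, ∀ m : ℕ,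
      Tendsto (fun n : ℕ => (∑ x ∈ TB d n, locInv m x ω) / (2 * (n : ℝ)) ^ d)
        atTop (nhds (∫ ω', locInv m 0 ω' ∂μ)) :=
    ae_all_iff.mpr fun m => tendsto_avg_locInv hd hμ m
  filter_upwards [hma] with ω hω
  rw [Metric.tendsto_atTop]
  intro ε hε
  obtain ⟨m, hm⟩ := exists_nat_one_div_lt (show (0 : ℝ) < ε / 4 by linarith)
  have hb := kappa_bounds hμ m
  obtain ⟨N1, hN1⟩ := Metric.tendsto_atTop.mp (hω m) (ε / 4) (by linarith)
  obtain ⟨N2, hN2⟩ := Metric.tendsto_atTop.mp (err_tendsto d m) (ε / 4) (by linarith)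
  refine ⟨N1 + N2 + m + 1, fun n hn => ?_⟩
  have hn1 : n ≥ N1 := by omega
  have hn2 : n ≥ N2 := by omega
  have hnpos : (0 : ℝ) < (n : ℝ) := by
    have : (0 : ℕ) < n := by omega
    exact_mod_cast this
  set D : ℝ := (2 * (n : ℝ)) ^ d with hD
  have hDpos : (0 : ℝ) < D := by positivity
  rw [Real.dist_eq, counting ω n]
  set S : ℝ := ∑ x ∈ TB d n, winInv n x ω with hS
  set A : ℝ := ∑ x ∈ TB d n, locInv m x ω with hA
  set κm : ℝ := ∫ ω', locInv m 0 ω' ∂μ with hκm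
  set κ : ℝ := ∫ ω', globInv 0 ω' ∂μ with hκ2
  have hAd : |A / D - κm| < ε / 4 := by
    have h := hN1 n hn1
    rw [Real.dist_eq] at h
    exact h
  obtain ⟨hAd1, hAd2⟩ := abs_lt.mp hAd
  have herr : (((TB d n).card : ℝ) - ((TBin d n m).card : ℝ)) / D < ε / 4 := by
    have h := hN2 n hn2
    rw [Real.dist_eq, sub_zero] at h
    exact lt_of_le_of_lt (le_abs_self _) h
  have hcard : ((TB d n).card : ℝ) = D := card_TB_real d n
  have hup : S / D ≤ A / D + ((m : ℝ) + 1)⁻¹ := by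
    have h := sum_winInv_le ω n m
    rw [hcard] at h
    calc S / D ≤ (A + D * ((m : ℝ) + 1)⁻¹) / D := (div_le_div_iff_of_pos_right hDpos).mpr h
      _ = A / D + ((m : ℝ) + 1)⁻¹ := by
          rw [add_div, mul_div_cancel_left₀ _ (ne_of_gt hDpos)]
  have hlo : A / D ≤ S / D + (((TB d n).card : ℝ) - ((TBin d n m).card : ℝ)) / D := by
    have h := sum_locInv_le ω n m
    calc A / D ≤ (S + (((TB d n).card : ℝ) - ((TBin d n m).card : ℝ))) / D :=
          (div_le_div_iff_of_pos_right hDpos).mpr h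
      _ = _ := add_div _ _ _
  have hminv : ((m : ℝ) + 1)⁻¹ < ε / 4 := by
    rw [← one_div]
    exact hm
  rw [abs_lt]
  constructor
  · linarith [hb.2]
  · linarith [hb.1]

end
end HP
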